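/- arXiv:0907.2831 — 4 statements merged into one kernel-verified Lean document; each statement's English description precedes it below -/
import Mathlib

section
/- lim_{n→∞} R_{3,2}(n)/n = 2/3. -/
/-- `S` contains a `k`-term arithmetic progression with common difference `d`,
starting at some `i ≥ 1`. -/
def HasAPd (S : Finset ℕ) (k d : ℕ) : Prop :=
  ∃ i : ℕ, 1 ≤ i ∧ ∀ j < k, i + j * d ∈ S

/-- `S ⊆ {1,…,n}` and `S` contains no `k`-term AP with common difference `d`,
`1 ≤ d ≤ D`. -/
def AvoidsAP (k D n : ℕ) (S : Finset ℕ) : Prop :=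
  S ⊆ Finset.Icc 1 n ∧ ∀ d : ℕ, 1 ≤ d → d ≤ D → ¬ HasAPd S k d

/-- `R k D n` : maximum cardinality of such an `S`. -/
noncomputable def R (k D n : ℕ) : ℕ :=
  sSup {m : ℕ | ∃ S : Finset ℕ, AvoidsAP k D n S ∧ S.card = m}

lemma R_bddAbove (n : ℕ) :
    ∀ m ∈ {m : ℕ | ∃ S : Finset ℕ, AvoidsAP 3 2 n S ∧ S.card = m}, m ≤ n := by
  rintro m ⟨S, hS, rfl⟩
  calc S.card ≤ (Finset.Icc 1 n).card := Finset.card_le_card hS.1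
    _ = n := by simp

lemma R_lower (n : ℕ) : n - n / 3 ≤ R 3 2 n := by
  apply le_csSup ⟨n, R_bddAbove n⟩
  refine ⟨(Finset.Icc 1 n).filter (fun x => ¬ (3 ∣ x)), ⟨Finset.filter_subset _ _, ?_⟩, ?_⟩
  · rintro d hd1 hd2 ⟨i, hi, h⟩
    have h0 := h 0 (by norm_num)
    have h1 := h 1 (by norm_num)
    have h2 := h 2 (by norm_num)
    simp only [Finset.mem_filter] at h0 h1 h2
    have := h0.2; have := h1.2; have := h2.2
    interval_cases d <;> omega
  · have hIcc : Finset.Icc 1 n = Finset.Ioc 0 n := rfl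
    rw [hIcc]
    have := Finset.card_filter_add_card_filter_not
      (s := Finset.Ioc 0 n) (p := fun x => 3 ∣ x)
    have hdvd : ((Finset.Ioc 0 n).filter (fun x => 3 ∣ x)).card = n / 3 := by
      simpa using Nat.Ioc_filter_dvd_card_eq_div n 3
    have hcard : (Finset.Ioc 0 n).card = n := by simp
    omega

lemma R_upper (n : ℕ) : R 3 2 n ≤ 2 * ((n + 2) / 3) := by
  apply csSup_le
  · exact ⟨0, ∅, ⟨Finset.empty_subset _,
      fun d _ _ ⟨i, hi, h⟩ => by simpa using h 0 (by norm_num)⟩, Finset.card_empty⟩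
  rintro m ⟨S, hS, rfl⟩
  have hsum : S.card = ∑ t ∈ Finset.range ((n + 2) / 3),
      (S.filter (fun x => (x - 1) / 3 = t)).card := by
    apply Finset.card_eq_sum_card_fiberwise
    intro x hx
    have := hS.1 hx
    simp only [Finset.mem_Icc] at this
    simp only [Finset.coe_range, Set.mem_Iio, Finset.mem_range]
    omega
  rw [hsum]
  calc ∑ t ∈ Finset.range ((n + 2) / 3), (S.filter (fun x => (x - 1) / 3 = t)).card
      ≤ ∑ _t ∈ Finset.range ((n + 2) / 3), 2 := by
        apply Finset.sum_le_sum
        intro t _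
        by_contra hgt
        push_neg at hgt
        have hsub : S.filter (fun x => (x - 1) / 3 = t) ⊆ Finset.Icc (3 * t + 1) (3 * t + 3) := by
          intro x hx
          simp only [Finset.mem_filter] at hx
          have := hS.1 hx.1
          simp only [Finset.mem_Icc] at this ⊢
          omega
        have hIc : (Finset.Icc (3 * t + 1) (3 * t + 3)).card = 3 := by simp
        have heq : S.filter (fun x => (x - 1) / 3 = t) = Finset.Icc (3 * t + 1) (3 * t + 3) :=
          Finset.eq_of_subset_of_card_le hsub (by omega)
        have hmem : ∀ j < 3, 3 * t + 1 + j * 1 ∈ S := by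
          intro j hj
          have : 3 * t + 1 + j * 1 ∈ S.filter (fun x => (x - 1) / 3 = t) := by
            rw [heq]
            simp only [Finset.mem_Icc]
            omega
          exact (Finset.mem_filter.mp this).1
        exact hS.2 1 le_rfl (by norm_num) ⟨3 * t + 1, by omega, hmem⟩
    _ = 2 * ((n + 2) / 3) := by
        rw [Finset.sum_const, Finset.card_range]; ring

theorem R_three_two_limit :
    Filter.Tendsto (fun n : ℕ => (R 3 2 n : ℝ) / n) Filter.atTop
      (nhds (2 / 3 : ℝ)) := by
  have hlim : Filter.Tendsto (fun n : ℕ => (2 / 3 : ℝ) + (4 / 3) * (1 / n))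
      Filter.atTop (nhds (2 / 3 : ℝ)) := by
    have := tendsto_const_nhds (x := (2 / 3 : ℝ)) (f := Filter.atTop (α := ℕ))
    have h2 := (tendsto_const_nhds (x := (4 / 3 : ℝ)) (f := Filter.atTop (α := ℕ))).mul
      tendsto_one_div_atTop_nhds_zero_nat
    simpa using this.add h2
  apply tendsto_of_tendsto_of_tendsto_of_le_of_le'
    (tendsto_const_nhds (x := (2 / 3 : ℝ))) hlim
  · filter_upwards [Filter.eventually_ge_atTop 1] with n hn
    have hn0 : (0 : ℝ) < n := by exact_mod_cast hn
    rw [le_div_iff₀ hn0]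
    have h1 : n - n / 3 ≤ R 3 2 n := R_lower n
    have h2 : ((n / 3 : ℕ) : ℝ) ≤ (n : ℝ) / 3 := Nat.cast_div_le
    have h3 : ((n - n / 3 : ℕ) : ℝ) = (n : ℝ) - ((n / 3 : ℕ) : ℝ) := by
      have : n / 3 ≤ n := Nat.div_le_self n 3
      push_cast [this]; ring
    have h4 : ((n - n / 3 : ℕ) : ℝ) ≤ (R 3 2 n : ℝ) := by exact_mod_cast h1
    nlinarith
  · filter_upwards [Filter.eventually_ge_atTop 1] with n hn
    have hn0 : (0 : ℝ) < n := by exact_mod_cast hn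
    rw [div_le_iff₀ hn0]
    have h1 : R 3 2 n ≤ 2 * ((n + 2) / 3) := R_upper n
    have h2 : (((n + 2) / 3 : ℕ) : ℝ) ≤ ((n : ℝ) + 2) / 3 := by
      have := Nat.cast_div_le (m := n + 2) (n := 3) (α := ℝ)
      push_cast at this ⊢
      linarith
    have h4 : ((R 3 2 n : ℕ) : ℝ) ≤ 2 * (((n + 2) / 3 : ℕ) : ℝ) := by exact_mod_cast h1
    have : (2 / 3 + 4 / 3 * (1 / (n : ℝ))) * n = 2 / 3 * n + 4 / 3 := by
      field_simp
    nlinarith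
end

section
/- For k ≥ 3, D ≥ 1, there exist positive integers P, Q and integers a_1, ..., a_Q such that for all sufficiently large n and all i ∈ {1,...,Q}, R_{k,D}(Qn + i) = Pn + a_i; i.e., R_{k,D} is eventually quasi-linear. -/
namespace QL

/-- window length -/
def Wd (k D : ℕ) : ℕ := (k - 1) * D
/-- number of window patterns -/
def Md (k D : ℕ) : ℕ := 2 ^ Wd k D
/-- the big period -/
def Kd (k D : ℕ) : ℕ := Nat.factorial (Md k D)

variable {k D : ℕ}

lemma Wd_ge_two (hk : 3 ≤ k) (hD : 1 ≤ D) : 2 ≤ Wd k D := by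
  have h : 2 * 1 ≤ (k - 1) * D := Nat.mul_le_mul (by omega) hD
  simpa [Wd] using h

lemma D_le_Wd (hk : 3 ≤ k) (hD : 1 ≤ D) : D ≤ Wd k D := by
  have h : 1 * D ≤ (k - 1) * D := Nat.mul_le_mul_right D (by omega)
  simpa [Wd] using h

def spliced (p q : ℕ) (X Z : Finset ℕ) : Finset ℕ :=
  (X.filter (fun x => x ≤ p)) ∪ ((Z.filter (fun z => q < z)).image (fun z => z - q + p))

lemma mem_spliced {p q : ℕ} {X Z : Finset ℕ} {x : ℕ} :
    x ∈ spliced p q X Z ↔ (x ∈ X ∧ x ≤ p) ∨ (∃ z ∈ Z, q < z ∧ x = z - q + p) := by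
  simp only [spliced, Finset.mem_union, Finset.mem_filter, Finset.mem_image]
  constructor
  · rintro (⟨h1, h2⟩ | ⟨z, ⟨hz, hqz⟩, he⟩)
    · exact Or.inl ⟨h1, h2⟩
    · exact Or.inr ⟨z, hz, hqz, he.symm⟩
  · rintro (⟨h1, h2⟩ | ⟨z, hz, hqz, he⟩)
    · exact Or.inl ⟨h1, h2⟩
    · exact Or.inr ⟨z, ⟨hz, hqz⟩, he.symm⟩

lemma card_spliced {p q : ℕ} {X Z : Finset ℕ} :
    (spliced p q X Z).card
      = (X.filter (fun x => x ≤ p)).card + (Z.filter (fun z => q < z)).card := by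
  rw [spliced, Finset.card_union_of_disjoint, Finset.card_image_of_injOn]
  · intro a ha b hb hab
    simp only [Finset.coe_filter, Set.mem_setOf_eq] at ha hb
    dsimp only at hab
    omega
  · rw [Finset.disjoint_left]
    intro a ha hb
    simp only [Finset.mem_filter] at ha
    simp only [Finset.mem_image, Finset.mem_filter] at hb
    obtain ⟨z, ⟨_, hz⟩, he⟩ := hb
    omega

lemma splice_avoids (hk : 3 ≤ k) (hD : 1 ≤ D)
    {a b p q : ℕ} {X Z : Finset ℕ}
    (hX : AvoidsAP k D a X) (hZ : AvoidsAP k D b Z)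
    (hqb : q ≤ b)
    (hp : Wd k D ≤ p) (hq : Wd k D ≤ q)
    (hwin : ∀ j, j < Wd k D → ((p - j) ∈ X ↔ (q - j) ∈ Z)) :
    AvoidsAP k D (b - q + p) (spliced p q X Z) := by
  constructor
  · intro x hx
    rw [mem_spliced] at hx
    rcases hx with ⟨hxX, hxp⟩ | ⟨z, hz, hqz, he⟩
    · have h := hX.1 hxX
      simp only [Finset.mem_Icc] at h ⊢
      omega
    · have h := hZ.1 hz
      simp only [Finset.mem_Icc] at h ⊢
      omega
  · intro d hd1 hdD hAP
    obtain ⟨i, hi1, hmem⟩ := hAP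
    obtain ⟨c, hcdef⟩ : ∃ c, (k - 1) * d = c := ⟨_, rfl⟩
    have span : c ≤ Wd k D := by
      rw [← hcdef]
      exact Nat.mul_le_mul_left _ hdD
    have hjd : ∀ j, j < k → j * d ≤ c := by
      intro j hj
      rw [← hcdef]
      exact Nat.mul_le_mul_right _ (by omega)
    by_cases hc1 : i + c ≤ p
    · apply hX.2 d hd1 hdD
      refine ⟨i, hi1, fun j hj => ?_⟩
      have h := hmem j hj
      rw [mem_spliced] at h
      have hle := hjd j hj
      rcases h with ⟨h1, _⟩ | ⟨z, hz, hqz, he⟩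
      · exact h1
      · omega
    · by_cases hc2 : p < i
      · apply hZ.2 d hd1 hdD
        refine ⟨i - p + q, by omega, fun j hj => ?_⟩
        have h := hmem j hj
        rw [mem_spliced] at h
        rcases h with ⟨_, h2⟩ | ⟨z, hz, hqz, he⟩
        · omega
        · have hze : z = i - p + q + j * d := by omega
          rwa [← hze]
      · push_neg at hc1 hc2
        apply hZ.2 d hd1 hdD
        refine ⟨i + q - p, by omega, fun j hj => ?_⟩
        have h := hmem j hj
        rw [mem_spliced] at h
        have hjle := hjd j hj
        rcases h with ⟨h1, h2⟩ | ⟨z, hz, hqz, he⟩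
        · have hj0 : p - (i + j * d) < Wd k D := by omega
          have hw := (hwin _ hj0).mp (by
            have he2 : p - (p - (i + j * d)) = i + j * d := by omega
            rwa [he2])
          have heq : q - (p - (i + j * d)) = i + q - p + j * d := by omega
          rwa [heq] at hw
        · have hze : z = i + q - p + j * d := by omega
          rwa [← hze]


lemma filter_pred_congr (S : Finset ℕ) (p q : ℕ → Prop) [DecidablePred p] [DecidablePred q]
    (h : ∀ x, p x ↔ q x) : S.filter p = S.filter q := by
  ext x; simp [Finset.mem_filter, h x]

lemma card_partition (S : Finset ℕ) (s t : ℕ) (hst : s ≤ t) :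
    (S.filter (fun x => x ≤ s)).card + (S.filter (fun x => t < x)).card
      + (S.filter (fun x => s < x ∧ x ≤ t)).card = S.card := by
  classical
  have h1 := Finset.card_filter_add_card_filter_not (s := S) (p := fun x => x ≤ s)
  have h2 := Finset.card_filter_add_card_filter_not
    (s := S.filter (fun x => ¬ x ≤ s)) (p := fun x => t < x)
  rw [Finset.filter_filter, Finset.filter_filter] at h2
  have e1 : S.filter (fun x => ¬ x ≤ s ∧ t < x) = S.filter (fun x => t < x) :=
    filter_pred_congr S _ _ (fun x => by constructor <;> (intro h; first | exact h.2 | exact ⟨by omega, h⟩))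
  have e2 : S.filter (fun x => ¬ x ≤ s ∧ ¬ t < x) = S.filter (fun x => s < x ∧ x ≤ t) :=
    filter_pred_congr S _ _ (fun x => by omega)
  rw [e1, e2] at h2
  omega

lemma card_filter_le_split (S : Finset ℕ) (s t : ℕ) (hst : s ≤ t) :
    (S.filter (fun x => x ≤ t)).card
      = (S.filter (fun x => x ≤ s)).card + (S.filter (fun x => s < x ∧ x ≤ t)).card := by
  classical
  have h1 := Finset.card_filter_add_card_filter_not
    (s := S.filter (fun x => x ≤ t)) (p := fun x => x ≤ s)
  rw [Finset.filter_filter, Finset.filter_filter] at h1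
  have e1 : S.filter (fun x => x ≤ t ∧ x ≤ s) = S.filter (fun x => x ≤ s) :=
    filter_pred_congr S _ _ (fun x => by omega)
  have e2 : S.filter (fun x => x ≤ t ∧ ¬ x ≤ s) = S.filter (fun x => s < x ∧ x ≤ t) :=
    filter_pred_congr S _ _ (fun x => by omega)
  rw [e1, e2] at h1
  omega

/-- Strip a "cycle" out of an avoiding set. -/
lemma strip (hk : 3 ≤ k) (hD : 1 ≤ D) {n s ℓ : ℕ} {S : Finset ℕ}
    (hS : AvoidsAP k D n S) (hs : Wd k D ≤ s) (hl : 1 ≤ ℓ) (hsl : s + ℓ ≤ n)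
    (hwin : ∀ j, j < Wd k D → ((s - j) ∈ S ↔ (s + ℓ - j) ∈ S)) :
    ∃ Y : Finset ℕ, AvoidsAP k D (n - ℓ) Y ∧
      Y.card + (S.filter (fun x => s < x ∧ x ≤ s + ℓ)).card = S.card ∧
      ∀ x, x ≤ s → (x ∈ Y ↔ x ∈ S) := by
  refine ⟨spliced s (s + ℓ) S S, ?_, ?_, ?_⟩
  · have h := splice_avoids hk hD hS hS hsl hs (le_trans hs (Nat.le_add_right s ℓ))
      (fun j hj => hwin j hj)
    have e : n - (s + ℓ) + s = n - ℓ := by omega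
    rwa [e] at h
  · rw [card_spliced]
    have := card_partition S s (s + ℓ) (by omega)
    have e1 : S.filter (fun x => s + ℓ < x) = S.filter (fun z => s + ℓ < z) := rfl
    omega
  · intro x hx
    rw [mem_spliced]
    constructor
    · rintro (⟨h, _⟩ | ⟨z, hz, h1, h2⟩)
      · exact h
      · omega
    · intro h; exact Or.inl ⟨h, hx⟩

/-- Pump a "cycle" once, preserving the cycle for further pumping. -/
lemma pump_step (hk : 3 ≤ k) (hD : 1 ≤ D) {n s ℓ : ℕ} {S : Finset ℕ}
    (hS : AvoidsAP k D n S) (hs : Wd k D ≤ s) (hl : 1 ≤ ℓ) (hsl : s + ℓ ≤ n)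
    (hwin : ∀ j, j < Wd k D → ((s - j) ∈ S ↔ (s + ℓ - j) ∈ S)) :
    ∃ S' : Finset ℕ, AvoidsAP k D (n + ℓ) S' ∧
      S'.card = S.card + (S.filter (fun x => s < x ∧ x ≤ s + ℓ)).card ∧
      (∀ j, j < Wd k D → ((s + ℓ - j) ∈ S' ↔ (s + ℓ + ℓ - j) ∈ S')) ∧
      (S'.filter (fun x => s + ℓ < x ∧ x ≤ s + ℓ + ℓ)).card
        = (S.filter (fun x => s < x ∧ x ≤ s + ℓ)).card := by
  have hsn : s ≤ n := by omega
  refine ⟨spliced (s + ℓ) s S S, ?_, ?_, ?_, ?_⟩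
  · have h := splice_avoids hk hD hS hS hsn
      (le_trans hs (Nat.le_add_right s ℓ)) hs (fun j hj => (hwin j hj).symm)
    have e : n - s + (s + ℓ) = n + ℓ := by omega
    rwa [e] at h
  · rw [card_spliced]
    have h1 := card_filter_le_split S s (s + ℓ) (by omega)
    have h2 := card_partition S s (s + ℓ) (by omega)
    have h4 := Finset.card_filter_add_card_filter_not (s := S) (p := fun x => x ≤ s)
    have e4 : S.filter (fun x => ¬ x ≤ s) = S.filter (fun z => s < z) :=
      filter_pred_congr S _ _ (fun x => by omega)
    rw [e4] at h4
    omega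
  · intro j hj
    have hA : (s + ℓ - j) ∈ spliced (s + ℓ) s S S ↔ (s + ℓ - j) ∈ S := by
      rw [mem_spliced]
      constructor
      · rintro (⟨h, _⟩ | ⟨z, hz, h1, h2⟩)
        · exact h
        · omega
      · intro h; exact Or.inl ⟨h, by omega⟩
    by_cases hjl : j < ℓ
    · have hB : (s + ℓ + ℓ - j) ∈ spliced (s + ℓ) s S S ↔ (s + ℓ - j) ∈ S := by
        rw [mem_spliced]
        constructor
        · rintro (⟨h, hle⟩ | ⟨z, hz, h1, h2⟩)
          · omega
          · have hze : z = s + ℓ - j := by omega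
            rwa [hze] at hz
        · intro h
          exact Or.inr ⟨s + ℓ - j, h, by omega, by omega⟩
      rw [hA, hB]
    · have hB : (s + ℓ + ℓ - j) ∈ spliced (s + ℓ) s S S ↔ (s + ℓ + ℓ - j) ∈ S := by
        rw [mem_spliced]
        constructor
        · rintro (⟨h, _⟩ | ⟨z, hz, h1, h2⟩)
          · exact h
          · omega
        · intro h; exact Or.inl ⟨h, by omega⟩
      have h2 := hwin (j - ℓ) (by omega)
      have e1 : s - (j - ℓ) = s + ℓ - j := by omega
      have e2 : s + ℓ - (j - ℓ) = s + ℓ + ℓ - j := by omega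
      rw [e1, e2] at h2
      rw [hA, hB]
      exact h2
  · have himg : (spliced (s + ℓ) s S S).filter (fun x => s + ℓ < x ∧ x ≤ s + ℓ + ℓ)
        = (S.filter (fun x => s < x ∧ x ≤ s + ℓ)).image (fun z => z + ℓ) := by
      ext x
      simp only [Finset.mem_filter, Finset.mem_image, mem_spliced]
      constructor
      · rintro ⟨(⟨h, hle⟩ | ⟨z, hz, h1, h2⟩), hx1, hx2⟩
        · omega
        · exact ⟨z, ⟨hz, by omega, by omega⟩, by omega⟩
      · rintro ⟨z, ⟨hz, h1, h2⟩, he⟩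
        exact ⟨Or.inr ⟨z, hz, h1, by omega⟩, by omega, by omega⟩
    rw [himg, Finset.card_image_of_injOn]
    intro a _ b _ hab
    dsimp only at hab
    omega

lemma pump_many (hk : 3 ≤ k) (hD : 1 ≤ D) :
    ∀ (r : ℕ) {n s ℓ g : ℕ} {S : Finset ℕ},
      AvoidsAP k D n S → Wd k D ≤ s → 1 ≤ ℓ → s + ℓ ≤ n →
      (∀ j, j < Wd k D → ((s - j) ∈ S ↔ (s + ℓ - j) ∈ S)) →
      (S.filter (fun x => s < x ∧ x ≤ s + ℓ)).card = g →
      ∃ S' : Finset ℕ, AvoidsAP k D (n + r * ℓ) S' ∧ S'.card = S.card + r * g := by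
  intro r
  induction r with
  | zero =>
    intro n s ℓ g S hS _ _ _ _ _
    exact ⟨S, by simpa using hS, by simp⟩
  | succ r ih =>
    intro n s ℓ g S hS hs hl hsl hwin hg
    obtain ⟨S', hS', hcard, hwin', hg'⟩ := pump_step hk hD hS hs hl hsl hwin
    have hsl' : (s + ℓ) + ℓ ≤ n + ℓ := by omega
    obtain ⟨S'', hS'', hcard''⟩ := ih hS' (by omega) hl hsl' hwin' (hg'.trans hg)
    refine ⟨S'', ?_, ?_⟩
    · have e : n + ℓ + r * ℓ = n + (r + 1) * ℓ := by ring
      rwa [e] at hS''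
    · subst hg
      rw [hcard'', hcard]
      ring


lemma exists_pair (S : Finset ℕ) (a : ℕ) (ha : Wd k D ≤ a) :
    ∃ s ℓ : ℕ, a ≤ s ∧ 1 ≤ ℓ ∧ ℓ ≤ Md k D ∧ s + ℓ ≤ a + Md k D ∧
      ∀ j, j < Wd k D → ((s - j) ∈ S ↔ (s + ℓ - j) ∈ S) := by
  classical
  have hcard : ((Finset.range (Wd k D)).powerset).card < (Finset.Icc a (a + Md k D)).card := by
    rw [Finset.card_powerset, Finset.card_range, Nat.card_Icc]
    have : Md k D = 2 ^ Wd k D := rfl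
    omega
  obtain ⟨x, hx, y, hy, hxy, hfeq⟩ :=
    Finset.exists_ne_map_eq_of_card_lt_of_maps_to hcard
      (f := fun p => (Finset.range (Wd k D)).filter (fun j => p - j ∈ S))
      (fun p _ => Finset.mem_powerset.mpr (Finset.filter_subset _ _))
  simp only [Finset.mem_Icc] at hx hy
  have hwin : ∀ u v : ℕ, ((Finset.range (Wd k D)).filter (fun j => u - j ∈ S))
      = ((Finset.range (Wd k D)).filter (fun j => v - j ∈ S)) →
      ∀ j, j < Wd k D → ((u - j) ∈ S ↔ (v - j) ∈ S) := by
    intro u v h j hj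
    have := Finset.ext_iff.mp h j
    simp only [Finset.mem_filter, Finset.mem_range] at this
    constructor
    · intro hm; exact (this.mp ⟨hj, hm⟩).2
    · intro hm; exact (this.mpr ⟨hj, hm⟩).2
  rcases Nat.lt_or_ge x y with hlt | hge
  · refine ⟨x, y - x, by omega, by omega, by omega, by omega, ?_⟩
    have e : x + (y - x) = y := by omega
    rw [e]
    exact hwin x y hfeq
  · have hlt : y < x := by omega
    refine ⟨y, x - y, by omega, by omega, by omega, by omega, ?_⟩
    have e : y + (x - y) = x := by omega
    rw [e]
    exact hwin y x hfeq.symm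

lemma avoids_mono {n m : ℕ} {S : Finset ℕ} (hnm : n ≤ m) (hS : AvoidsAP k D n S) :
    AvoidsAP k D m S :=
  ⟨fun x hx => Finset.Icc_subset_Icc le_rfl hnm (hS.1 hx), hS.2⟩

lemma avoids_empty (hk : 3 ≤ k) (n : ℕ) : AvoidsAP k D n (∅ : Finset ℕ) := by
  refine ⟨by simp, fun d _ _ h => ?_⟩
  obtain ⟨i, _, hm⟩ := h
  simpa using hm 0 (by omega)

lemma R_bdd (n : ℕ) : ∀ m ∈ {m : ℕ | ∃ S : Finset ℕ, AvoidsAP k D n S ∧ S.card = m}, m ≤ n := by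
  rintro m ⟨S, hS, rfl⟩
  calc S.card ≤ (Finset.Icc 1 n).card := Finset.card_le_card hS.1
  _ = n := by rw [Nat.card_Icc]; omega

lemma R_exists (hk : 3 ≤ k) (n : ℕ) :
    ∃ S : Finset ℕ, AvoidsAP k D n S ∧ S.card = R k D n := by
  have hne : {m : ℕ | ∃ S : Finset ℕ, AvoidsAP k D n S ∧ S.card = m}.Nonempty :=
    ⟨0, ∅, avoids_empty hk n, rfl⟩
  have hbdd : BddAbove {m : ℕ | ∃ S : Finset ℕ, AvoidsAP k D n S ∧ S.card = m} :=
    ⟨n, fun m hm => R_bdd n m hm⟩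
  exact Nat.sSup_mem hne hbdd

lemma le_R {n : ℕ} {S : Finset ℕ} (hS : AvoidsAP k D n S) : S.card ≤ R k D n :=
  le_csSup ⟨n, fun m hm => R_bdd n m hm⟩ ⟨S, hS, rfl⟩

lemma R_le_self (hk : 3 ≤ k) (n : ℕ) : R k D n ≤ n := by
  obtain ⟨S, hS, hc⟩ := R_exists hk n
  rw [← hc]
  exact R_bdd n _ ⟨S, hS, rfl⟩

lemma R_mono (hk : 3 ≤ k) {m n : ℕ} (h : m ≤ n) : R k D m ≤ R k D n := by
  obtain ⟨S, hS, hc⟩ := R_exists hk m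
  rw [← hc]
  exact le_R (avoids_mono h hS)

def Usable (k D ℓ g : ℕ) : Prop :=
  1 ≤ ℓ ∧ ℓ ≤ Md k D ∧ ∃ n S s, AvoidsAP k D n S ∧ Wd k D ≤ s ∧ s + ℓ ≤ n ∧
    (∀ j, j < Wd k D → ((s - j) ∈ S ↔ (s + ℓ - j) ∈ S)) ∧
    g = (S.filter (fun x => s < x ∧ x ≤ s + ℓ)).card

lemma usable_g_le {ℓ g : ℕ} (h : Usable k D ℓ g) : g ≤ ℓ := by
  obtain ⟨_, _, n, S, s, _, _, _, _, hg⟩ := h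
  rw [hg]
  calc (S.filter (fun x => s < x ∧ x ≤ s + ℓ)).card
      ≤ (Finset.Icc (s + 1) (s + ℓ)).card := by
        apply Finset.card_le_card
        intro x hx
        simp only [Finset.mem_filter] at hx
        simp only [Finset.mem_Icc]
        omega
  _ = ℓ := by rw [Nat.card_Icc]; omega

lemma usable_basic (hk : 3 ≤ k) (hD : 1 ≤ D) : Usable k D (Wd k D + 1) 1 := by
  have hW2 := Wd_ge_two hk hD
  have hDW := D_le_Wd hk hD
  set W := Wd k D with hWdef
  refine ⟨by omega, ?_, 3 * (W + 1), {W + 1, 2 * (W + 1), 3 * (W + 1)}, 2 * (W + 1), ?_, by omega,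
    by omega, ?_, ?_⟩
  · have := @Nat.lt_two_pow_self W
    simp only [Md]
    rw [← hWdef]
    omega
  · constructor
    · intro x hx
      simp only [Finset.mem_insert, Finset.mem_singleton] at hx
      simp only [Finset.mem_Icc]
      omega
    · intro d hd1 hdD hAP
      obtain ⟨i, hi1, hm⟩ := hAP
      have h0 := hm 0 (by omega)
      have h1 := hm 1 (by omega)
      simp only [Finset.mem_insert, Finset.mem_singleton] at h0 h1
      omega
  · intro j hj
    simp only [Finset.mem_insert, Finset.mem_singleton]
    omega
  · have he : ({W + 1, 2 * (W + 1), 3 * (W + 1)} : Finset ℕ).filter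
        (fun x => 2 * (W + 1) < x ∧ x ≤ 2 * (W + 1) + (W + 1)) = {3 * (W + 1)} := by
      ext x
      simp only [Finset.mem_filter, Finset.mem_insert, Finset.mem_singleton]
      omega
    rw [he, Finset.card_singleton]

lemma exists_max (hk : 3 ≤ k) (hD : 1 ≤ D) :
    ∃ ℓs gs : ℕ, Usable k D ℓs gs ∧ 1 ≤ gs ∧ 1 ≤ ℓs ∧
      ∀ ℓ g, Usable k D ℓ g → g * ℓs ≤ gs * ℓ := by
  classical
  set T : Set ℕ := {v : ℕ | ∃ ℓ g, Usable k D ℓ g ∧ v = g * (Kd k D / ℓ)} with hT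
  have hne : T.Nonempty := ⟨1 * (Kd k D / (Wd k D + 1)), ⟨_, _, usable_basic hk hD, rfl⟩⟩
  have hbdd : BddAbove T := by
    refine ⟨Md k D * Kd k D, ?_⟩
    rintro v ⟨ℓ, g, hu, rfl⟩
    have h1 : g ≤ Md k D := le_trans (usable_g_le hu) hu.2.1
    have h2 : Kd k D / ℓ ≤ Kd k D := Nat.div_le_self _ _
    exact Nat.mul_le_mul h1 h2
  have hmem := Nat.sSup_mem hne hbdd
  obtain ⟨ℓs, gs, hus, hv⟩ := hmem
  have hkey : ∀ ℓ g, Usable k D ℓ g → g * ℓs ≤ gs * ℓ := by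
    intro ℓ g hug
    have hle : g * (Kd k D / ℓ) ≤ gs * (Kd k D / ℓs) := by
      rw [← hv]
      exact le_csSup hbdd ⟨ℓ, g, hug, rfl⟩
    have hdl : ℓ ∣ Kd k D := Nat.dvd_factorial hug.1 hug.2.1
    have hdls : ℓs ∣ Kd k D := Nat.dvd_factorial hus.1 hus.2.1
    have c1 : Kd k D / ℓ * ℓ = Kd k D := Nat.div_mul_cancel hdl
    have c2 : Kd k D / ℓs * ℓs = Kd k D := Nat.div_mul_cancel hdls
    have h2 : g * (Kd k D / ℓ) * (ℓ * ℓs) ≤ gs * (Kd k D / ℓs) * (ℓ * ℓs) :=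
      Nat.mul_le_mul_right _ hle
    have e1 : g * ℓs * Kd k D = g * (Kd k D / ℓ) * (ℓ * ℓs) := by
      calc g * ℓs * Kd k D = g * ℓs * (Kd k D / ℓ * ℓ) := by rw [c1]
      _ = g * (Kd k D / ℓ) * (ℓ * ℓs) := by ring
    have e2 : gs * ℓ * Kd k D = gs * (Kd k D / ℓs) * (ℓ * ℓs) := by
      calc gs * ℓ * Kd k D = gs * ℓ * (Kd k D / ℓs * ℓs) := by rw [c2]
      _ = gs * (Kd k D / ℓs) * (ℓ * ℓs) := by ring
    have : g * ℓs * Kd k D ≤ gs * ℓ * Kd k D := by rw [e1, e2]; exact h2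
    exact Nat.le_of_mul_le_mul_right this (Nat.factorial_pos _)
  refine ⟨ℓs, gs, hus, ?_, hus.1, hkey⟩
  have hb := hkey _ _ (usable_basic hk hD)
  have hls1 := hus.1
  by_contra hgs
  push_neg at hgs
  interval_cases gs
  · simp at hb; omega


lemma lemA (hk : 3 ≤ k) (hD : 1 ≤ D) {ℓs gs : ℕ}
    (hkey : ∀ ℓ g, Usable k D ℓ g → g * ℓs ≤ gs * ℓ) :
    ∀ n, ℓs * R k D n ≤ gs * n + ℓs * (Wd k D + Md k D) := by
  intro n
  induction n using Nat.strong_induction_on with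
  | _ n ih =>
    by_cases hn : n < Wd k D + Md k D
    · calc ℓs * R k D n ≤ ℓs * n := Nat.mul_le_mul_left _ (R_le_self hk n)
      _ ≤ ℓs * (Wd k D + Md k D) := Nat.mul_le_mul_left _ (by omega)
      _ ≤ gs * n + ℓs * (Wd k D + Md k D) := Nat.le_add_left _ _
    · push_neg at hn
      obtain ⟨S, hS, hcard⟩ := R_exists hk n
      obtain ⟨s, ℓ, hs, hl1, hlM, hsl, hwin⟩ := exists_pair S (Wd k D) le_rfl
      have hsln : s + ℓ ≤ n := le_trans hsl hn
      obtain ⟨Y, hY, hYcard, _⟩ := strip hk hD hS hs hl1 hsln hwin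
      have hug : Usable k D ℓ (S.filter (fun x => s < x ∧ x ≤ s + ℓ)).card :=
        ⟨hl1, hlM, n, S, s, hS, hs, hsln, hwin, rfl⟩
      have h1 : R k D n ≤ R k D (n - ℓ) + (S.filter (fun x => s < x ∧ x ≤ s + ℓ)).card := by
        have := le_R hY
        omega
      have h2 := ih (n - ℓ) (by omega)
      have h3 := hkey ℓ _ hug
      rw [Nat.mul_comm] at h3
      have hln : ℓ ≤ n := by omega
      calc ℓs * R k D n
          ≤ ℓs * (R k D (n - ℓ) + (S.filter (fun x => s < x ∧ x ≤ s + ℓ)).card) :=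
            Nat.mul_le_mul_left _ h1
      _ = ℓs * R k D (n - ℓ) + ℓs * (S.filter (fun x => s < x ∧ x ≤ s + ℓ)).card := by ring
      _ ≤ (gs * (n - ℓ) + ℓs * (Wd k D + Md k D)) + gs * ℓ := Nat.add_le_add h2 h3
      _ = gs * ((n - ℓ) + ℓ) + ℓs * (Wd k D + Md k D) := by ring
      _ = gs * n + ℓs * (Wd k D + Md k D) := by rw [Nat.sub_add_cancel hln]

lemma lemB (hk : 3 ≤ k) (hD : 1 ≤ D) {ℓs gs : ℕ} (hus : Usable k D ℓs gs) :
    ∃ C₂ : ℕ, ∀ n, gs * n ≤ ℓs * R k D n + C₂ := by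
  obtain ⟨hl1, hlM, n₀, S₀, s₀, hS₀, hs₀, hsl₀, hwin₀, hg₀⟩ := hus
  refine ⟨gs * (n₀ + ℓs), fun n => ?_⟩
  by_cases hn : n < n₀
  · have : gs * n ≤ gs * (n₀ + ℓs) := Nat.mul_le_mul_left _ (by omega)
    omega
  · push_neg at hn
    obtain ⟨r, m0, hrm, hm0⟩ : ∃ r m0, n - n₀ = ℓs * r + m0 ∧ m0 < ℓs :=
      ⟨(n - n₀) / ℓs, (n - n₀) % ℓs, (Nat.div_add_mod _ _).symm, Nat.mod_lt _ (by omega)⟩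
    have hcomm : ℓs * r = r * ℓs := Nat.mul_comm _ _
    have h1 : r * ℓs ≤ n - n₀ := by omega
    have h2 : n - n₀ < r * ℓs + ℓs := by omega
    obtain ⟨S', hS', hc'⟩ := pump_many hk hD r hS₀ hs₀ hl1 hsl₀ hwin₀ hg₀.symm
    have hRn : r * gs ≤ R k D n := by
      have hle : S'.card ≤ R k D (n₀ + r * ℓs) := le_R hS'
      have hmono : R k D (n₀ + r * ℓs) ≤ R k D n := R_mono hk (by omega)
      omega
    have hmul : gs * (n - n₀) ≤ gs * (r * ℓs + ℓs) := Nat.mul_le_mul_left _ h2.le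
    have hRmul : ℓs * (r * gs) ≤ ℓs * R k D n := Nat.mul_le_mul_left _ hRn
    have e1 : gs * (r * ℓs + ℓs) = ℓs * (r * gs) + gs * ℓs := by ring
    have e2 : gs * n = gs * n₀ + gs * (n - n₀) := by
      rw [← Nat.mul_add]
      congr 1
      omega
    have e3 : gs * (n₀ + ℓs) = gs * n₀ + gs * ℓs := by ring
    omega

/-- Iterated stripping of non-critical cycles, one per block. -/
lemma str (hk : 3 ≤ k) (hD : 1 ≤ D) {ℓs gs : ℕ} :
    ∀ (r : ℕ) (n : ℕ) (S : Finset ℕ), AvoidsAP k D n S →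
      Wd k D + (Md k D + 1) * r ≤ n →
      (∀ s ℓ, Wd k D ≤ s → 1 ≤ ℓ → ℓ ≤ Md k D → s + ℓ ≤ Wd k D + (Md k D + 1) * r →
        (∀ j, j < Wd k D → ((s - j) ∈ S ↔ (s + ℓ - j) ∈ S)) →
        ℓs * (S.filter (fun x => s < x ∧ x ≤ s + ℓ)).card + 1 ≤ gs * ℓ) →
      ∃ m Y, m ≤ n ∧ AvoidsAP k D m Y ∧
        ℓs * S.card + r ≤ ℓs * Y.card + gs * (n - m) := by
  intro r
  induction r with
  | zero =>
    intro n S hS _ _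
    exact ⟨n, S, le_rfl, hS, by simp⟩
  | succ r ih =>
    intro n S hS hlen H
    obtain ⟨s, ℓ, hsa, hl1, hlM, hsl, hwin⟩ := exists_pair (k := k) (D := D) S
      (Wd k D + (Md k D + 1) * r) (by omega)
    have hbound : s + ℓ ≤ Wd k D + (Md k D + 1) * (r + 1) := by
      have : (Md k D + 1) * (r + 1) = (Md k D + 1) * r + (Md k D + 1) := by ring
      omega
    have hsln : s + ℓ ≤ n := by omega
    have hs : Wd k D ≤ s := by omega
    obtain ⟨Y₁, hY₁, hY₁card, hagree⟩ := strip hk hD hS hs hl1 hsln hwin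
    have hHs := H s ℓ hs hl1 hlM hbound hwin
    have hlenY₁ : Wd k D + (Md k D + 1) * r ≤ n - ℓ := by
      have : (Md k D + 1) * (r + 1) = (Md k D + 1) * r + (Md k D + 1) := by ring
      omega
    have H' : ∀ s' ℓ', Wd k D ≤ s' → 1 ≤ ℓ' → ℓ' ≤ Md k D →
        s' + ℓ' ≤ Wd k D + (Md k D + 1) * r →
        (∀ j, j < Wd k D → ((s' - j) ∈ Y₁ ↔ (s' + ℓ' - j) ∈ Y₁)) →
        ℓs * (Y₁.filter (fun x => s' < x ∧ x ≤ s' + ℓ')).card + 1 ≤ gs * ℓ' := by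
      intro s' ℓ' hs' hl1' hlM' hb' hwin'
      have hb's : s' + ℓ' ≤ s := by omega
      have hwinS : ∀ j, j < Wd k D → ((s' - j) ∈ S ↔ (s' + ℓ' - j) ∈ S) := by
        intro j hj
        rw [← hagree (s' - j) (by omega), ← hagree (s' + ℓ' - j) (by omega)]
        exact hwin' j hj
      have hfe : Y₁.filter (fun x => s' < x ∧ x ≤ s' + ℓ')
          = S.filter (fun x => s' < x ∧ x ≤ s' + ℓ') := by
        ext x
        simp only [Finset.mem_filter]
        constructor
        · rintro ⟨hx, h1, h2⟩
          exact ⟨(hagree x (by omega)).mp hx, h1, h2⟩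
        · rintro ⟨hx, h1, h2⟩
          exact ⟨(hagree x (by omega)).mpr hx, h1, h2⟩
      rw [hfe]
      exact H s' ℓ' hs' hl1' hlM' (by
        have : (Md k D + 1) * (r + 1) = (Md k D + 1) * r + (Md k D + 1) := by ring
        omega) hwinS
    obtain ⟨m, Y, hm, hY, hineq⟩ := ih (n - ℓ) Y₁ hY₁ hlenY₁ H'
    refine ⟨m, Y, by omega, hY, ?_⟩
    have hSc : ℓs * S.card = ℓs * Y₁.card + ℓs * (S.filter (fun x => s < x ∧ x ≤ s + ℓ)).card := by
      rw [← Nat.mul_add]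
      congr 1
      omega
    have e : gs * (n - ℓ - m) + gs * ℓ = gs * (n - m) := by
      rw [← Nat.mul_add]
      congr 1
      omega
    omega

/-- Every optimal set at large scale contains a critical cycle. -/
lemma lemC (hk : 3 ≤ k) (hD : 1 ≤ D) {ℓs gs C₂ : ℕ}
    (hkey : ∀ ℓ g, Usable k D ℓ g → g * ℓs ≤ gs * ℓ)
    (hA : ∀ n, ℓs * R k D n ≤ gs * n + ℓs * (Wd k D + Md k D))
    (hB : ∀ n, gs * n ≤ ℓs * R k D n + C₂) :
    ∀ n, Wd k D + (Md k D + 1) * (ℓs * (Wd k D + Md k D) + C₂ + 1) ≤ n →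
      ∀ S : Finset ℕ, AvoidsAP k D n S → S.card = R k D n →
      ∃ s ℓ, Wd k D ≤ s ∧ 1 ≤ ℓ ∧ ℓ ≤ Md k D ∧ s + ℓ ≤ n ∧
        (∀ j, j < Wd k D → ((s - j) ∈ S ↔ (s + ℓ - j) ∈ S)) ∧
        ℓs * (S.filter (fun x => s < x ∧ x ≤ s + ℓ)).card = gs * ℓ := by
  intro n hn S hS hScard
  set r := ℓs * (Wd k D + Md k D) + C₂ + 1 with hrdef
  by_contra hno
  push_neg at hno
  have H : ∀ s ℓ, Wd k D ≤ s → 1 ≤ ℓ → ℓ ≤ Md k D → s + ℓ ≤ Wd k D + (Md k D + 1) * r →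
      (∀ j, j < Wd k D → ((s - j) ∈ S ↔ (s + ℓ - j) ∈ S)) →
      ℓs * (S.filter (fun x => s < x ∧ x ≤ s + ℓ)).card + 1 ≤ gs * ℓ := by
    intro s ℓ hs hl1 hlM hb hwin
    have hsln : s + ℓ ≤ n := by omega
    have hne := hno s ℓ hs hl1 hlM hsln hwin
    have hug : Usable k D ℓ (S.filter (fun x => s < x ∧ x ≤ s + ℓ)).card :=
      ⟨hl1, hlM, n, S, s, hS, hs, hsln, hwin, rfl⟩
    have := hkey ℓ _ hug
    have e : (S.filter (fun x => s < x ∧ x ≤ s + ℓ)).card * ℓs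
        = ℓs * (S.filter (fun x => s < x ∧ x ≤ s + ℓ)).card := Nat.mul_comm _ _
    omega
  obtain ⟨m, Y, hm, hY, hineq⟩ := str hk hD r n S hS hn H
  have h1 : ℓs * Y.card ≤ ℓs * R k D m := Nat.mul_le_mul_left _ (le_R hY)
  have h2 := hA m
  have h3 := hB n
  have e : gs * m + gs * (n - m) = gs * n := by
    rw [← Nat.mul_add]
    congr 1
    omega
  rw [hScard] at hineq
  omega

/-- The key pumping inequality at scale `Kd`. -/
lemma lemD (hk : 3 ≤ k) (hD : 1 ≤ D) {ℓs gs C₂ : ℕ}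
    (hus : Usable k D ℓs gs)
    (hkey : ∀ ℓ g, Usable k D ℓ g → g * ℓs ≤ gs * ℓ)
    (hA : ∀ n, ℓs * R k D n ≤ gs * n + ℓs * (Wd k D + Md k D))
    (hB : ∀ n, gs * n ≤ ℓs * R k D n + C₂) :
    ∀ n, Wd k D + (Md k D + 1) * (ℓs * (Wd k D + Md k D) + C₂ + 1) ≤ n →
      R k D n + gs * (Kd k D / ℓs) ≤ R k D (n + Kd k D) := by
  intro n hn
  obtain ⟨S, hS, hScard⟩ := R_exists hk n
  obtain ⟨s, ℓ, hs, hl1, hlM, hsl, hwin, hcrit⟩ := lemC hk hD hkey hA hB n hn S hS hScard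
  obtain ⟨S', hS', hc'⟩ := pump_many hk hD (Kd k D / ℓ) hS hs hl1 hsl hwin rfl
  have hdl : ℓ ∣ Kd k D := Nat.dvd_factorial hl1 hlM
  have hdls : ℓs ∣ Kd k D := Nat.dvd_factorial hus.1 hus.2.1
  have c1 : Kd k D / ℓ * ℓ = Kd k D := Nat.div_mul_cancel hdl
  have c2 : Kd k D / ℓs * ℓs = Kd k D := Nat.div_mul_cancel hdls
  have hgain : (Kd k D / ℓ) * (S.filter (fun x => s < x ∧ x ≤ s + ℓ)).card
      = gs * (Kd k D / ℓs) := by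
    have hls1 : 1 ≤ ℓs := hus.1
    have hpos : 0 < ℓ * ℓs := Nat.mul_pos (by omega) (by omega : 0 < ℓs)
    apply Nat.eq_of_mul_eq_mul_right hpos
    calc (Kd k D / ℓ) * (S.filter (fun x => s < x ∧ x ≤ s + ℓ)).card * (ℓ * ℓs)
        = (Kd k D / ℓ * ℓ) * (ℓs * (S.filter (fun x => s < x ∧ x ≤ s + ℓ)).card) := by ring
    _ = Kd k D * (gs * ℓ) := by rw [c1, hcrit]
    _ = (Kd k D / ℓs * ℓs) * (gs * ℓ) := by rw [c2]
    _ = gs * (Kd k D / ℓs) * (ℓ * ℓs) := by ring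
  have hle : S'.card ≤ R k D (n + Kd k D) := by
    have := le_R hS'
    rwa [c1] at this
  omega


lemma mono_bdd_const (z : ℕ → ℤ) (hm : ∀ j, z j ≤ z (j + 1)) (B : ℤ) (hB : ∀ j, z j ≤ B) :
    ∃ J : ℕ, ∀ j, J ≤ j → z j = z J := by
  have hmono : Monotone z := monotone_nat_of_le_succ hm
  obtain ⟨lub, ⟨J, hJ⟩, hub⟩ := Int.exists_greatest_of_bdd
    (P := fun v => ∃ j, z j = v) ⟨B, fun v hv => by obtain ⟨j, hj⟩ := hv; rw [← hj]; exact hB j⟩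
    ⟨z 0, 0, rfl⟩
  refine ⟨J, fun j hj => le_antisymm ?_ (hmono hj)⟩
  rw [hJ]
  exact hub _ ⟨j, rfl⟩

end QL

theorem R_quasilinear (k D : ℕ) (hk : 3 ≤ k) (hD : 1 ≤ D) :
    ∃ P Q : ℕ, 0 < P ∧ 0 < Q ∧ ∃ a : ℕ → ℤ, ∃ N : ℕ,
      ∀ n ≥ N, ∀ i : ℕ, 1 ≤ i → i ≤ Q →
        (R k D (Q * n + i) : ℤ) = P * n + a i := by
  classical
  obtain ⟨ℓs, gs, hus, hgs1, hls1, hkey⟩ := QL.exists_max hk hD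
  have hA := QL.lemA hk hD hkey
  obtain ⟨C₂, hB⟩ := QL.lemB hk hD hus
  have hDlem := QL.lemD hk hD hus hkey hA hB
  set N₁ := QL.Wd k D + (QL.Md k D + 1) * (ℓs * (QL.Wd k D + QL.Md k D) + C₂ + 1) with hN₁
  set Q := QL.Kd k D with hQdef
  set P := gs * (QL.Kd k D / ℓs) with hPdef
  have hdls : ℓs ∣ QL.Kd k D := Nat.dvd_factorial hus.1 hus.2.1
  have hQpos : 0 < Q := Nat.factorial_pos _
  have hPpos : 0 < P := by
    apply Nat.mul_pos (by omega)
    exact Nat.div_pos (Nat.le_of_dvd (Nat.factorial_pos _) hdls) (by omega)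
  have hlsP : ℓs * P = gs * Q := by
    rw [hPdef, hQdef]
    calc ℓs * (gs * (QL.Kd k D / ℓs)) = gs * (ℓs * (QL.Kd k D / ℓs)) := by ring
    _ = gs * QL.Kd k D := by rw [Nat.mul_div_cancel' hdls]
  have hstep : ∀ m, N₁ ≤ m → R k D m + P ≤ R k D (m + Q) := fun m hm => hDlem m hm
  have hper : ∀ i : ℕ, ∃ J : ℕ, ∀ j, J ≤ j →
      (R k D (Q * (N₁ + j) + i) : ℤ) - (P : ℤ) * j
        = (R k D (Q * (N₁ + J) + i) : ℤ) - (P : ℤ) * J := by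
    intro i
    refine QL.mono_bdd_const (fun j => (R k D (Q * (N₁ + j) + i) : ℤ) - (P : ℤ) * j) ?_
      ((gs * Q * N₁ + gs * i + ℓs * (QL.Wd k D + QL.Md k D) : ℕ) : ℤ) ?_
    · intro j
      try dsimp only
      have hge : N₁ ≤ Q * (N₁ + j) + i := by
        have h := Nat.le_mul_of_pos_left (N₁ + j) hQpos
        omega
      have hst := hstep (Q * (N₁ + j) + i) hge
      have he : Q * (N₁ + j) + i + Q = Q * (N₁ + (j + 1)) + i := by ring
      rw [he] at hst
      have hstz : (R k D (Q * (N₁ + j) + i) : ℤ) + (P : ℤ)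
          ≤ (R k D (Q * (N₁ + (j + 1)) + i) : ℤ) := by exact_mod_cast hst
      push_cast
      linarith
    · intro j
      try dsimp only
      have hAm := hA (Q * (N₁ + j) + i)
      have hAz : ((ℓs * R k D (Q * (N₁ + j) + i) : ℕ) : ℤ)
          ≤ ((gs * (Q * (N₁ + j) + i) + ℓs * (QL.Wd k D + QL.Md k D) : ℕ) : ℤ) := by
        exact_mod_cast hAm
      have hlsPz : (ℓs : ℤ) * (P : ℤ) = (gs : ℤ) * (Q : ℤ) := by exact_mod_cast hlsP
      rcases le_or_gt ((R k D (Q * (N₁ + j) + i) : ℤ) - (P : ℤ) * j) 0 with hz0 | hz0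
      · have hnn : (0 : ℤ)
            ≤ ((gs * Q * N₁ + gs * i + ℓs * (QL.Wd k D + QL.Md k D) : ℕ) : ℤ) :=
          Int.natCast_nonneg _
        linarith
      · have h1 : (R k D (Q * (N₁ + j) + i) : ℤ) - (P : ℤ) * j
            ≤ (ℓs : ℤ) * ((R k D (Q * (N₁ + j) + i) : ℤ) - (P : ℤ) * j) :=
          le_mul_of_one_le_left hz0.le (by exact_mod_cast hls1)
        have e : (ℓs : ℤ) * ((P : ℤ) * j) = (gs : ℤ) * (Q : ℤ) * j := by
          rw [← mul_assoc, hlsPz]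
        have e2 := mul_sub (ℓs : ℤ) (R k D (Q * (N₁ + j) + i) : ℤ) ((P : ℤ) * j)
        push_cast at hAz ⊢
        linarith
  choose Jf hJf using hper
  set J := (Finset.Icc 1 Q).sup Jf with hJdef
  refine ⟨P, Q, hPpos, hQpos,
    fun i => (R k D (Q * (N₁ + J) + i) : ℤ) - (P : ℤ) * ((N₁ : ℤ) + (J : ℤ)), N₁ + J, ?_⟩
  intro n hn i hi1 hiQ
  have hJfi : Jf i ≤ J := Finset.le_sup (f := Jf) (Finset.mem_Icc.mpr ⟨hi1, hiQ⟩)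
  have h1 := hJf i (n - N₁) (by omega)
  have h2 := hJf i J hJfi
  have e : N₁ + (n - N₁) = n := by omega
  rw [e] at h1
  have h3 := h1.trans h2.symm
  rw [Nat.cast_sub (by omega : N₁ ≤ n)] at h3
  push_cast at h3 ⊢
  linarith
end

section
/- For every k ≥ 3 and D ≥ 1, the limit α_{k,D} = lim_{n→∞} R_{k,D}(n)/n is a rational number. -/
lemma card_le_of_avoids {k D n : ℕ} {S : Finset ℕ} (h : AvoidsAP k D n S) :
    S.card ≤ n := by
  calc S.card ≤ (Finset.Icc 1 n).card := Finset.card_le_card h.1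
  _ = n := by simp

lemma le_R {k D n : ℕ} {S : Finset ℕ} (h : AvoidsAP k D n S) : S.card ≤ R k D n := by
  apply le_csSup
  · exact ⟨n, fun m ⟨S', hS', hc⟩ => hc ▸ card_le_of_avoids hS'⟩
  · exact ⟨S, h, rfl⟩

lemma avoids_empty {k D n : ℕ} (hk : 1 ≤ k) : AvoidsAP k D n (∅ : Finset ℕ) := by
  refine ⟨Finset.empty_subset _, fun d _ _ ⟨i, _, hAP⟩ => ?_⟩
  exact absurd (hAP 0 (by omega)) (by simp)

lemma R_spec (k D n : ℕ) (hk : 1 ≤ k) :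
    ∃ S : Finset ℕ, AvoidsAP k D n S ∧ S.card = R k D n := by
  have h := Nat.sSup_mem (s := {m : ℕ | ∃ S : Finset ℕ, AvoidsAP k D n S ∧ S.card = m})
    ⟨0, ∅, avoids_empty hk, rfl⟩ ⟨n, fun m ⟨S', hS', hc⟩ => hc ▸ card_le_of_avoids hS'⟩
  exact h

lemma R_le {k D n : ℕ} (hk : 1 ≤ k) : R k D n ≤ n := by
  obtain ⟨S, hS, hc⟩ := R_spec k D n hk
  exact hc ▸ card_le_of_avoids hS

def ValidPat (k D p : ℕ) (T : Finset ℕ) : Prop :=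
  ∀ i d : ℕ, 1 ≤ d → d ≤ D → ¬ (∀ j < k, (i + j * d) % p ∈ T)

-- counting: number of x in [1,n] with x % p ∈ T is at least (n/p) * T.card
lemma count_pattern {p n : ℕ} (hp : 1 ≤ p) (T : Finset ℕ) (hT : T ⊆ Finset.range p) :
    (n / p) * T.card ≤ ((Finset.Icc 1 n).filter (fun x => x % p ∈ T)).card := by
  have := Finset.card_le_card_of_injOn
    (f := fun qr : ℕ × ℕ => qr.1 * p + (if qr.2 = 0 then p else qr.2))
    (s := Finset.range (n / p) ×ˢ T)
    (t := (Finset.Icc 1 n).filter (fun x => x % p ∈ T)) ?_ ?_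
  · simpa using this
  · rintro ⟨q, r⟩ hqr
    simp only [Finset.coe_product, Set.mem_prod, Finset.mem_coe, Finset.mem_range] at hqr
    obtain ⟨hq, hr⟩ := hqr
    have hrp : r < p := Finset.mem_range.mp (hT hr)
    have hq1 : q + 1 ≤ n / p := hq
    have hle : (q + 1) * p ≤ n := le_trans (Nat.mul_le_mul_right p hq1) (Nat.div_mul_le_self n p)
    simp only [Finset.coe_filter, Set.mem_setOf_eq, Finset.mem_filter, Finset.mem_Icc]
    refine ⟨⟨?_, ?_⟩, ?_⟩
    · split <;> omega
    · split <;> nlinarith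
    · have key : (q * p + (if r = 0 then p else r)) % p = r := by
        split
        · next h =>
          subst h
          have : q * p + p = (q + 1) * p := by ring
          rw [this, Nat.mul_mod_left]
        · have : (q * p + r) % p = r % p := by
            conv_lhs => rw [Nat.mul_comm]
            exact Nat.mul_add_mod p q r
          rw [this, Nat.mod_eq_of_lt hrp]
      rw [key]; exact hr
  · rintro ⟨q, r⟩ hqr ⟨q', r'⟩ hqr' heq
    simp only [Finset.mem_product, Finset.mem_range, Finset.mem_coe] at hqr hqr'
    have hrp : r < p := Finset.mem_range.mp (hT hqr.2)
    have hrp' : r' < p := Finset.mem_range.mp (hT hqr'.2)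
    simp only at heq
    have h1 : (if r = 0 then p else r) ≤ p := by split <;> omega
    have h2 : (if r' = 0 then p else r') ≤ p := by split <;> omega
    have h3 : 1 ≤ (if r = 0 then p else r) := by split <;> omega
    have h4 : 1 ≤ (if r' = 0 then p else r') := by split <;> omega
    have hq : q = q' := by
      by_contra hne
      rcases Nat.lt_or_ge q q' with h | h
      · have : (q + 1) * p ≤ q' * p := Nat.mul_le_mul_right p h
        nlinarith
      · have : q' < q := by omega
        have : (q' + 1) * p ≤ q * p := Nat.mul_le_mul_right p this
        nlinarith
    subst hq
    have : (if r = 0 then p else r) = (if r' = 0 then p else r') := by omega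
    ext
    · rfl
    · simp only
      split at this <;> split at this <;> omega

lemma pattern_lower {k D p n : ℕ} (hp : 1 ≤ p) {T : Finset ℕ} (hT : T ⊆ Finset.range p)
    (hV : ValidPat k D p T) : (n / p) * T.card ≤ R k D n := by
  refine le_trans (count_pattern hp T hT) (le_R ⟨Finset.filter_subset _ _, ?_⟩)
  rintro d hd1 hdD ⟨i, hi, hAP⟩
  refine hV i d hd1 hdD fun j hj => ?_
  have := hAP j hj
  simp only [Finset.mem_filter] at this
  exact this.2

/-- mod p is injective on S ∩ Ioc t (t+p) -/
lemma mod_inj_Ioc {p t : ℕ} : Set.InjOn (· % p) (Finset.Ioc t (t + p)) := by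
  intro x hx y hy hxy
  simp only [Finset.coe_Ioc, Set.mem_Ioc] at hx hy
  simp only at hxy
  have hp : 0 < p := by omega
  rcases Nat.lt_trichotomy x y with h | h | h
  · exfalso
    obtain ⟨c, hc⟩ := (Nat.modEq_iff_dvd' h.le).mp hxy
    rcases Nat.eq_zero_or_pos c with rfl | hc0
    · omega
    · have := Nat.le_mul_of_pos_right p hc0; omega
  · exact h
  · exfalso
    obtain ⟨c, hc⟩ := (Nat.modEq_iff_dvd' h.le).mp hxy.symm
    rcases Nat.eq_zero_or_pos c with rfl | hc0
    · omega
    · have := Nat.le_mul_of_pos_right p hc0; omega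

lemma cut_pattern {k D n t p : ℕ} {S : Finset ℕ} (hk : 3 ≤ k)
    (hS : AvoidsAP k D n S) (hWt : (k - 1) * D ≤ t) (hWp : (k - 1) * D ≤ p)
    (hwin : ∀ x, t - (k - 1) * D < x → x ≤ t → (x ∈ S ↔ x + p ∈ S)) :
    ∃ T : Finset ℕ, T ⊆ Finset.range p ∧ ValidPat k D p T ∧
      T.card = (S ∩ Finset.Ioc t (t + p)).card := by
  set W := (k - 1) * D with hW
  refine ⟨(S ∩ Finset.Ioc t (t + p)).image (· % p), ?_, ?_, ?_⟩
  · intro r hr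
    simp only [Finset.mem_image] at hr
    obtain ⟨x, hx, rfl⟩ := hr
    have : x ∈ Finset.Ioc t (t + p) := (Finset.mem_inter.mp hx).2
    simp only [Finset.mem_Ioc] at this
    exact Finset.mem_range.mpr (Nat.mod_lt _ (by omega))
  · -- validity
    intro i d hd1 hdD hAP
    have hkd : (k - 1) * d ≤ W := Nat.mul_le_mul_left _ hdD
    -- get representative for last term
    have hlast := hAP (k - 1) (by omega)
    simp only [Finset.mem_image] at hlast
    obtain ⟨y, hy, hymod⟩ := hlast
    obtain ⟨hyS, hyI⟩ := Finset.mem_inter.mp hy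
    simp only [Finset.mem_Ioc] at hyI
    set i0 := y - (k - 1) * d with hi0
    have hi0y : i0 + (k - 1) * d = y := by omega
    have hmem : ∀ j < k, i0 + j * d ∈ S := by
      intro j hj
      set x := i0 + j * d with hx
      have hxy : x + (k - 1 - j) * d = y := by
        have : j * d + (k - 1 - j) * d = (k - 1) * d := by
          rw [← Nat.add_mul]; congr 1; omega
        omega
      have hxr : x % p = (i + j * d) % p := by
        have h1 : Nat.ModEq p (x + (k - 1 - j) * d) ((i + j * d) + (k - 1 - j) * d) := by
          have : (i + j * d) + (k - 1 - j) * d = i + (k - 1) * d := by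
            have : j * d + (k - 1 - j) * d = (k - 1) * d := by
              rw [← Nat.add_mul]; congr 1; omega
            omega
          rw [hxy, this]
          exact hymod
        exact Nat.ModEq.add_right_cancel' _ h1
      have hxT : x % p ∈ (S ∩ Finset.Ioc t (t + p)).image (· % p) := by
        rw [hxr]; exact hAP j hj
      simp only [Finset.mem_image] at hxT
      obtain ⟨z, hz, hzmod⟩ := hxT
      obtain ⟨hzS, hzI⟩ := Finset.mem_inter.mp hz
      have hxlow : t - W < x := by
        have : x + W ≥ x + (k - 1 - j) * d := by
          have : (k - 1 - j) * d ≤ (k - 1) * d := Nat.mul_le_mul_right _ (by omega)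
          omega
        omega
      have hxhi : x ≤ t + p := by omega
      rcases le_or_gt x t with hxt | hxt
      · -- x ≤ t : use window
        have hxpI : x + p ∈ Finset.Ioc t (t + p) := by
          simp only [Finset.mem_Ioc]; omega
        have : z = x + p := mod_inj_Ioc (by exact_mod_cast hzI)
          (by exact_mod_cast hxpI) (by simpa [Nat.add_mod_right] using hzmod)
        exact (hwin x hxlow hxt).mpr (this ▸ hzS)
      · have hxI : x ∈ Finset.Ioc t (t + p) := by
          simp only [Finset.mem_Ioc]; omega
        have : z = x := mod_inj_Ioc (by exact_mod_cast hzI) (by exact_mod_cast hxI) hzmod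
        exact this ▸ hzS
    exact hS.2 d hd1 hdD ⟨i0, by omega, hmem⟩
  · exact Finset.card_image_of_injOn (fun x hx y hy h =>
      mod_inj_Ioc (Finset.mem_coe.mpr (Finset.mem_inter.mp hx).2)
        (Finset.mem_coe.mpr (Finset.mem_inter.mp hy).2) h)

lemma splice {k D n t p : ℕ} {S : Finset ℕ} (hk : 3 ≤ k)
    (hS : AvoidsAP k D n S) (hWt : (k - 1) * D ≤ t) (hp : 1 ≤ p) (htpn : t + p ≤ n)
    (hwin : ∀ x, t - (k - 1) * D < x → x ≤ t → (x ∈ S ↔ x + p ∈ S)) :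
    AvoidsAP k D (n - p) ((S ∩ Finset.Icc 1 t) ∪ ((S ∩ Finset.Ioc (t + p) n).image (· - p))) ∧
    ((S ∩ Finset.Icc 1 t) ∪ ((S ∩ Finset.Ioc (t + p) n).image (· - p))).card
      = (S ∩ Finset.Icc 1 t).card + (S ∩ Finset.Ioc (t + p) n).card := by
  set W := (k - 1) * D with hW
  set S' := (S ∩ Finset.Icc 1 t) ∪ ((S ∩ Finset.Ioc (t + p) n).image (· - p)) with hS'
  -- membership characterization
  have hmemS' : ∀ x, x ∈ S' ↔ (x ∈ S ∧ 1 ≤ x ∧ x ≤ t) ∨ (x + p ∈ S ∧ t < x ∧ x + p ≤ n) := by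
    intro x
    simp only [hS', Finset.mem_union, Finset.mem_inter, Finset.mem_Icc, Finset.mem_image,
      Finset.mem_Ioc]
    constructor
    · rintro (⟨h1, h2, h3⟩ | ⟨y, ⟨hyS, hy1, hy2⟩, rfl⟩)
      · exact Or.inl ⟨h1, h2, h3⟩
      · right
        have : y - p + p = y := by omega
        rw [this]
        exact ⟨hyS, by omega, by omega⟩
    · rintro (⟨h1, h2, h3⟩ | ⟨h1, h2, h3⟩)
      · exact Or.inl ⟨h1, h2, h3⟩
      · exact Or.inr ⟨x + p, ⟨h1, by omega, h3⟩, by omega⟩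
  constructor
  · constructor
    · intro x hx
      rw [hmemS'] at hx
      simp only [Finset.mem_Icc]
      rcases hx with ⟨_, h2, h3⟩ | ⟨_, h2, h3⟩ <;> omega
    · rintro d hd1 hdD ⟨i, hi, hAP⟩
      have hkd : (k - 1) * d ≤ W := Nat.mul_le_mul_left _ hdD
      rcases le_or_gt (i + (k - 1) * d) t with hlast | hlast
      · -- all terms ≤ t, all in S
        refine hS.2 d hd1 hdD ⟨i, hi, fun j hj => ?_⟩
        have := (hmemS' _).mp (hAP j hj)
        have hjle : j * d ≤ (k - 1) * d := Nat.mul_le_mul_right _ (by omega)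
        rcases this with ⟨h1, _, _⟩ | ⟨_, h2, _⟩
        · exact h1
        · omega
      · -- all terms + p in S
        refine hS.2 d hd1 hdD ⟨i + p, by omega, fun j hj => ?_⟩
        have hterm := (hmemS' _).mp (hAP j hj)
        have hjle : j * d ≤ (k - 1) * d := Nat.mul_le_mul_right _ (by omega)
        have hxlow : t - W < i + j * d := by omega
        have : i + p + j * d = (i + j * d) + p := by ring
        rw [this]
        rcases hterm with ⟨h1, _, h3⟩ | ⟨h1, _, _⟩
        · exact (hwin _ hxlow h3).mp h1
        · exact h1
  · rw [Finset.card_union_of_disjoint, Finset.card_image_of_injOn]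
    · intro x hx y hy hxy
      simp only [Finset.mem_coe, Finset.mem_inter, Finset.mem_Ioc] at hx hy
      simp only at hxy
      omega
    · rw [Finset.disjoint_left]
      intro x hx hx'
      simp only [Finset.mem_inter, Finset.mem_Icc] at hx
      simp only [Finset.mem_image, Finset.mem_inter, Finset.mem_Ioc] at hx'
      obtain ⟨y, ⟨_, hy1, _⟩, rfl⟩ := hx'
      omega

lemma card_decomp {n t p : ℕ} {S : Finset ℕ} (hsub : S ⊆ Finset.Icc 1 n) (htpn : t + p ≤ n) :
    S.card = (S ∩ Finset.Icc 1 t).card + (S ∩ Finset.Ioc t (t + p)).card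
      + (S ∩ Finset.Ioc (t + p) n).card := by
  have h1 : S = (S ∩ Finset.Icc 1 t) ∪ (S ∩ Finset.Ioc t (t + p)) ∪ (S ∩ Finset.Ioc (t + p) n) := by
    ext x
    simp only [Finset.mem_union, Finset.mem_inter, Finset.mem_Icc, Finset.mem_Ioc]
    constructor
    · intro hx
      have hb := Finset.mem_Icc.mp (hsub hx)
      rcases le_or_gt x t with h | h
      · exact Or.inl (Or.inl ⟨hx, by omega, h⟩)
      · rcases le_or_gt x (t + p) with h' | h'
        · exact Or.inl (Or.inr ⟨hx, h, h'⟩)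
        · exact Or.inr ⟨hx, h', by omega⟩
    · rintro ((⟨h, _⟩ | ⟨h, _⟩) | ⟨h, _⟩) <;> exact h
  conv_lhs => rw [h1]
  rw [Finset.card_union_of_disjoint, Finset.card_union_of_disjoint]
  · rw [Finset.disjoint_left]
    intro x hx hx'
    simp only [Finset.mem_inter, Finset.mem_Icc, Finset.mem_Ioc] at hx hx'
    omega
  · rw [Finset.disjoint_left]
    intro x hx hx'
    simp only [Finset.mem_union, Finset.mem_inter, Finset.mem_Icc, Finset.mem_Ioc] at hx hx'
    omega
lemma key_bounds (k D : ℕ) (hk : 3 ≤ k) (hD : 1 ≤ D) :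
    ∃ β : ℚ, ∃ C : ℕ, ∀ n : ℕ, |(R k D n : ℚ) - β * n| ≤ C := by
  classical
  set W := (k - 1) * D with hWdef
  have hW1 : 1 ≤ W := by
    have : 1 ≤ k - 1 := by omega
    calc 1 = 1 * 1 := by ring
    _ ≤ (k - 1) * D := Nat.mul_le_mul this hD
  set M := 2 ^ W with hMdef
  set C := (M + 1) * W with hCdef
  set B : Finset ℚ := (Finset.Icc 1 (M * W)).biUnion (fun p =>
    ((Finset.range p).powerset.filter (fun T => ValidPat k D p T)).image
      (fun T => (T.card : ℚ) / p)) with hBdef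
  have hmemB : ∀ q : ℚ, q ∈ B ↔ ∃ p, (1 ≤ p ∧ p ≤ M * W) ∧ ∃ T : Finset ℕ,
      (T ⊆ Finset.range p ∧ ValidPat k D p T) ∧ (T.card : ℚ) / p = q := by
    intro q
    simp only [hBdef, Finset.mem_biUnion, Finset.mem_Icc, Finset.mem_image, Finset.mem_filter,
      Finset.mem_powerset]
  have h0B : (0 : ℚ) ∈ B := by
    rw [hmemB]
    refine ⟨1, ⟨le_refl 1, Nat.mul_pos (Nat.two_pow_pos W) hW1⟩, ∅, ⟨by simp, ?_⟩, by simp⟩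
    intro i d _ _ hAP
    exact absurd (hAP 0 (by omega)) (by simp)
  have hBne : B.Nonempty := ⟨0, h0B⟩
  set β := B.max' hBne with hβdef
  have hβ0 : 0 ≤ β := Finset.le_max' B 0 h0B
  refine ⟨β, C, ?_⟩
  -- upper bound by strong induction
  have hupper : ∀ n : ℕ, (R k D n : ℚ) ≤ β * n + C := by
    intro n
    induction n using Nat.strong_induction_on with
    | _ n ih =>
      rcases le_or_gt n C with hn | hn
      · have h1 : (R k D n : ℚ) ≤ n := by exact_mod_cast R_le (k := k) (D := D) (n := n) (by omega)
        have h2 : (n : ℚ) ≤ C := by exact_mod_cast hn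
        nlinarith
      · obtain ⟨S, hS, hScard⟩ := R_spec k D n (by omega)
        -- pigeonhole on states
        obtain ⟨j, hj, j', hj', hne, heq⟩ :=
          Finset.exists_ne_map_eq_of_card_lt_of_maps_to
            (s := Finset.Icc 1 (M + 1)) (t := (Finset.univ : Finset (Fin W → Bool)))
            (by simp [hMdef]) (f := fun j => fun a : Fin W => decide (j * W - (a : ℕ) ∈ S))
            (fun a _ => Finset.mem_univ _)
        simp only [Finset.mem_Icc] at hj hj'
        -- wlog j < j'
        wlog hlt : j < j' generalizing j j'
        · exact this j' j hne.symm heq.symm hj' hj (by omega)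
        set t := j * W with htdef
        set p := (j' - j) * W with hpdef
        have htp : t + p = j' * W := by
          rw [htdef, hpdef, Nat.sub_mul]
          have : j * W ≤ j' * W := Nat.mul_le_mul_right _ (by omega)
          omega
        have hWt : W ≤ t := by
          calc W = 1 * W := (one_mul W).symm
          _ ≤ j * W := Nat.mul_le_mul_right _ hj.1
        have hWp : W ≤ p := by
          calc W = 1 * W := (one_mul W).symm
          _ ≤ (j' - j) * W := Nat.mul_le_mul_right _ (by omega)
        have hpMW : p ≤ M * W := Nat.mul_le_mul_right _ (by omega)
        have htpn : t + p ≤ n := by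
          rw [htp]
          calc j' * W ≤ (M + 1) * W := Nat.mul_le_mul_right _ hj'.2
          _ ≤ n := by omega
        have hwin : ∀ x, t - W < x → x ≤ t → (x ∈ S ↔ x + p ∈ S) := by
          intro x hx1 hx2
          have ha : t - x < W := by omega
          have h := congrFun heq ⟨t - x, ha⟩
          simp only at h
          have e1 : j * W - (t - x) = x := by omega
          have e2 : j' * W - (t - x) = x + p := by omega
          rw [e1, e2] at h
          exact decide_eq_decide.mp h
        obtain ⟨T, hTsub, hTval, hTcard⟩ := cut_pattern hk hS hWt hWp hwin
        obtain ⟨hS'avoid, hS'card⟩ := splice hk hS hWt (by omega) htpn hwin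
        have hdecomp := card_decomp hS.1 htpn
        have hRle : R k D n ≤ R k D (n - p) + T.card := by
          have h1 : (S ∩ Finset.Icc 1 t).card + (S ∩ Finset.Ioc (t + p) n).card
              ≤ R k D (n - p) := hS'card ▸ le_R hS'avoid
          omega
        have hcβ : (T.card : ℚ) ≤ β * p := by
          have hmem : (T.card : ℚ) / p ∈ B := (hmemB _).mpr
            ⟨p, ⟨by omega, hpMW⟩, T, ⟨hTsub, hTval⟩, rfl⟩
          have hle : (T.card : ℚ) / p ≤ β := Finset.le_max' B _ hmem
          have hp0 : (0 : ℚ) < p := by exact_mod_cast (by omega : 0 < p)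
          calc (T.card : ℚ) = (T.card : ℚ) / p * p := by field_simp
          _ ≤ β * p := by
            apply mul_le_mul_of_nonneg_right hle hp0.le
        have hih := ih (n - p) (by omega)
        have hcast : ((n - p : ℕ) : ℚ) = (n : ℚ) - p := by
          have : p ≤ n := by omega
          push_cast [this]; ring
        have h2 : (R k D n : ℚ) ≤ (R k D (n - p) : ℚ) + T.card := by exact_mod_cast hRle
        calc (R k D n : ℚ) ≤ (R k D (n - p) : ℚ) + T.card := h2
        _ ≤ β * ((n : ℚ) - p) + C + β * p := by rw [← hcast]; linarith
        _ = β * n + C := by ring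
  -- lower bound
  have hlower : ∀ n : ℕ, β * n - C ≤ (R k D n : ℚ) := by
    intro n
    obtain ⟨p, ⟨hp1, hpMW⟩, T, ⟨hTsub, hTval⟩, hβeq⟩ := (hmemB β).mp (B.max'_mem hBne)
    have hlow := pattern_lower (k := k) (D := D) (n := n) hp1 hTsub hTval
    have hp0 : (0 : ℚ) < p := by exact_mod_cast hp1
    have hc0 : (0 : ℚ) ≤ T.card := by positivity
    have hcp : (T.card : ℚ) ≤ p := by
      exact_mod_cast le_trans (Finset.card_le_card hTsub) (le_of_eq (Finset.card_range p))
    have hfloor : (n : ℚ) / p - 1 ≤ ((n / p : ℕ) : ℚ) := by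
      have ha : (p : ℚ) * ((n / p : ℕ) : ℚ) + ((n % p : ℕ) : ℚ) = n := by
        exact_mod_cast Nat.div_add_mod n p
      have hb : ((n % p : ℕ) : ℚ) < p := by
        exact_mod_cast Nat.mod_lt n (show 0 < p by omega)
      rw [sub_le_iff_le_add, div_le_iff₀ hp0]
      nlinarith
    have hlowq : ((n / p : ℕ) : ℚ) * T.card ≤ (R k D n : ℚ) := by exact_mod_cast hlow
    have hβn : β * n = (n : ℚ) / p * T.card := by
      rw [← hβeq]; field_simp
    have hCp : (p : ℚ) ≤ C := by
      have : (p : ℕ) ≤ C := le_trans hpMW (by rw [hCdef]; nlinarith)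
      exact_mod_cast this
    calc β * n - C ≤ (n : ℚ) / p * T.card - T.card := by
          rw [hβn]
          have : (T.card : ℚ) ≤ C := le_trans hcp hCp
          linarith
    _ = ((n : ℚ) / p - 1) * T.card := by ring
    _ ≤ ((n / p : ℕ) : ℚ) * T.card := mul_le_mul_of_nonneg_right hfloor hc0
    _ ≤ (R k D n : ℚ) := hlowq
  intro n
  rw [abs_le]
  constructor
  · linarith [hlower n]
  · linarith [hupper n]

theorem R_density_rational (k D : ℕ) (hk : 3 ≤ k) (hD : 1 ≤ D) :
    ∃ α : ℚ, Filter.Tendsto (fun n : ℕ => (R k D n : ℝ) / n) Filter.atTop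
      (nhds (α : ℝ)) := by
  obtain ⟨β, C, hbound⟩ := key_bounds k D hk hD
  refine ⟨β, ?_⟩
  rw [tendsto_iff_dist_tendsto_zero]
  apply squeeze_zero' (Filter.Eventually.of_forall fun n => dist_nonneg)
    (g := fun n : ℕ => (C : ℝ) / n)
  · filter_upwards [Filter.eventually_ge_atTop 1] with n hn
    have hn0 : (0 : ℝ) < n := by exact_mod_cast hn
    have hq : |(R k D n : ℝ) - (β : ℝ) * n| ≤ C := by
      have := hbound n
      have h2 : |((R k D n : ℚ) - β * n : ℚ)| ≤ ((C : ℚ) : ℚ) := this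
      calc |(R k D n : ℝ) - (β : ℝ) * n| = ((|(R k D n : ℚ) - β * n| : ℚ) : ℝ) := by
            rw [Rat.cast_abs]; push_cast; ring_nf
      _ ≤ C := by exact_mod_cast h2
    rw [Real.dist_eq]
    have : (R k D n : ℝ) / n - β = ((R k D n : ℝ) - β * n) / n := by
      field_simp
    rw [this, abs_div, abs_of_pos hn0]
    exact div_le_div_of_nonneg_right hq hn0.le
  · exact tendsto_const_div_atTop_nhds_zero_nat _
end

section
/- Suppose sequences f_1, ..., f_N : ℕ → ℤ satisfy f_i(n) = max( f_{a(i)}(n-1) + 1, f_{b(i)}(n-1) ) for all n ≥ 1, where a, b : {1,...,N} → {1,...,N}. Then each f_i is eventually quasi-linear: there exist positive integers P, Q and for each i an integer c_i such that f_i(Qn + j) = Pn + c_{i,j} for all sufficiently large n (i.e., f_i(n+Q) = f_i(n) + P eventually). -/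
namespace MaxRecAux

def walkF {N : ℕ} (a b : Fin N → Fin N) (i : Fin N) (w : List Bool) : Fin N :=
  w.foldl (fun j c => if c then a j else b j) i

lemma walkF_cons {N : ℕ} (a b : Fin N → Fin N) (i : Fin N) (c : Bool) (w : List Bool) :
    walkF a b i (c :: w) = walkF a b (if c then a i else b i) w := rfl

lemma walkF_append {N : ℕ} (a b : Fin N → Fin N) (i : Fin N) (x y : List Bool) :
    walkF a b i (x ++ y) = walkF a b (walkF a b i x) y :=
  List.foldl_append

lemma walkF_replicate {N : ℕ} (a b : Fin N → Fin N) (i : Fin N) (k : ℕ) :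
    walkF a b i (List.replicate k true) = a^[k] i := by
  induction k generalizing i with
  | zero => rfl
  | succ k ih =>
      rw [List.replicate_succ, walkF_cons]
      simp only [if_true]
      rw [ih, Function.iterate_succ_apply]

lemma split_false : ∀ (w : List Bool) (k : ℕ), ¬ (List.replicate k true <+: w) →
    k ≤ w.length → ∃ p rest, p < k ∧ w = List.replicate p true ++ false :: rest := by
  intro w
  induction w with
  | nil =>
      intro k hk hl
      simp only [List.length_nil, Nat.le_zero] at hl
      subst hl
      simp at hk
  | cons c w ih =>
      intro k hk hl
      match k with
      | 0 => simp at hk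
      | k+1 =>
        cases c with
        | false => exact ⟨0, w, by omega, by simp⟩
        | true =>
            have hk' : ¬ (List.replicate k true <+: w) := by
              intro h; apply hk; rw [List.replicate_succ]
              exact List.cons_prefix_cons.mpr ⟨rfl, h⟩
            obtain ⟨p, rest, hp, hw⟩ := ih k hk' (by simpa using hl)
            exact ⟨p+1, rest, by omega, by rw [List.replicate_succ]; simp [hw]⟩

lemma noRun (N : ℕ) (hN : 1 ≤ N) : ∀ (L : ℕ) (w : List Bool), w.length ≤ L →
    (∀ w1 w2, w ≠ w1 ++ List.replicate N true ++ w2) →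
    N * w.count true + w.length + 1 ≤ N * (w.length + 1) := by
  intro L
  induction L with
  | zero =>
      intro w hw _
      have h0 : w.length = 0 := by omega
      have hc : w.count true ≤ w.length := List.count_le_length
      rw [h0]
      have hc0 : w.count true = 0 := by omega
      rw [hc0]
      omega
  | succ L ih =>
      intro w hw hnr
      by_cases hlen : w.length < N
      · have hc : w.count true ≤ w.length := List.count_le_length
        nlinarith [hc, hlen]
      · push_neg at hlen
        have hpre : ¬ (List.replicate N true <+: w) := by
          intro h
          obtain ⟨t, ht⟩ := h
          exact hnr [] t (by simp [← ht])
        obtain ⟨p, rest, hp, hweq⟩ := split_false w N hpre hlen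
        have hnr' : ∀ w1 w2, rest ≠ w1 ++ List.replicate N true ++ w2 := by
          intro w1 w2 h
          apply hnr (List.replicate p true ++ false :: w1) w2
          rw [hweq, h]; simp
        have hlw : w.length = p + 1 + rest.length := by
          rw [hweq]; simp; omega
        have hlrest : rest.length ≤ L := by omega
        have ihr := ih rest hlrest hnr'
        have hcw : w.count true = p + rest.count true := by
          rw [hweq]
          simp [List.count_append, List.count_cons, List.count_replicate]
        rw [hcw, hlw]
        nlinarith [ihr, hp]

lemma iter_cycle {N : ℕ} (a : Fin N → Fin N) (u : Fin N) :
    a^[N + Nat.factorial N] u = a^[N] u := by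
  have main : ∀ p q : ℕ, p < q → q ≤ N → a^[p] u = a^[q] u →
      a^[N + Nat.factorial N] u = a^[N] u := by
    intro p q hpq hqN heq
    have hstep : ∀ s, p ≤ s → a^[s + (q - p)] u = a^[s] u := by
      intro s hs
      have h1 : s + (q - p) = (s - p) + q := by omega
      have h2 : s = (s - p) + p := by omega
      rw [h1, Function.iterate_add_apply, ← heq, ← Function.iterate_add_apply, ← h2]
    have hmul : ∀ t s, p ≤ s → a^[s + t * (q - p)] u = a^[s] u := by
      intro t
      induction t with
      | zero => intro s hs; simp
      | succ t iht =>
          intro s hs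
          have h3 : s + (t+1) * (q - p) = (s + t * (q - p)) + (q - p) := by ring
          rw [h3, hstep (s + t * (q - p)) (by omega), iht s hs]
    have hdvd : (q - p) ∣ Nat.factorial N := Nat.dvd_factorial (by omega) (by omega)
    obtain ⟨t, ht⟩ := hdvd
    have h4 : N + Nat.factorial N = N + t * (q - p) := by rw [ht, Nat.mul_comm]
    rw [h4]
    exact hmul t N (by omega)
  have hcard : Fintype.card (Fin N) < Fintype.card (Fin (N+1)) := by simp
  obtain ⟨x, y, hxy, hfeq⟩ :=
    Fintype.exists_ne_map_eq_of_card_lt (fun k : Fin (N+1) => a^[k.1] u) hcard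
  rcases lt_or_gt_of_ne hxy with h | h
  · exact main x.1 y.1 h (by omega) hfeq
  · exact main y.1 x.1 h (by omega) hfeq.symm

end MaxRecAux

open MaxRecAux
theorem max_recurrence_quasilinear (N : ℕ) (hN : 1 ≤ N)
    (a b : Fin N → Fin N) (f : Fin N → ℕ → ℤ)
    (hf : ∀ i : Fin N, ∀ n : ℕ, 1 ≤ n →
      f i n = max (f (a i) (n - 1) + 1) (f (b i) (n - 1))) :
    ∃ P Q : ℕ, 0 < P ∧ 0 < Q ∧ ∃ N0 : ℕ,
      ∀ i : Fin N, ∀ n ≥ N0, f i (n + Q) = f i n + P := by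
  haveI : NeZero N := ⟨by omega⟩
  haveI hne : Nonempty (Fin N) := ⟨⟨0, hN⟩⟩
  set Q := Nat.factorial N with hQdef
  have hQpos : 0 < Q := Nat.factorial_pos N
  set Mx := Finset.univ.sup' Finset.univ_nonempty (fun j : Fin N => f j 0) with hMxdef
  set mn := Finset.univ.inf' Finset.univ_nonempty (fun j : Fin N => f j 0) with hmndef
  have hM : ∀ j, f j 0 ≤ Mx := by
    intro j; rw [hMxdef]; exact Finset.le_sup' (fun j : Fin N => f j 0) (Finset.mem_univ j)
  have hm : ∀ j, mn ≤ f j 0 := by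
    intro j; rw [hmndef]; exact Finset.inf'_le (fun j : Fin N => f j 0) (Finset.mem_univ j)
  have hmM : mn ≤ Mx := (hm (Classical.arbitrary _)).trans (hM _)
  -- upper bound
  have UB : ∀ (n : ℕ) (i : Fin N), f i n ≤ (n : ℤ) + Mx := by
    intro n
    induction n with
    | zero => intro i; simpa using hM i
    | succ n ih =>
        intro i
        have hrec := hf i (n+1) (by omega)
        simp only [Nat.add_sub_cancel] at hrec
        rw [hrec]
        have h1 := ih (a i)
        have h2 := ih (b i)
        push_cast
        apply max_le <;> linarith
  -- lower bound
  have LB : ∀ (n : ℕ) (i : Fin N), (n : ℤ) + mn ≤ f i n := by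
    intro n
    induction n with
    | zero => intro i; simpa using hm i
    | succ n ih =>
        intro i
        have hrec := hf i (n+1) (by omega)
        simp only [Nat.add_sub_cancel] at hrec
        rw [hrec]
        have h1 := ih (a i)
        have h2 : f (a i) n + 1 ≤ max (f (a i) n + 1) (f (b i) n) := le_max_left _ _
        push_cast
        linarith
  -- optimal word exists
  have hword : ∀ (n : ℕ) (i : Fin N), ∃ w : List Bool, w.length = n ∧
      f i n = (w.count true : ℤ) + f (walkF a b i w) 0 := by
    intro n
    induction n with
    | zero => intro i; exact ⟨[], rfl, by simp [walkF]⟩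
    | succ n ih =>
        intro i
        obtain ⟨wa, hwa, hva⟩ := ih (a i)
        obtain ⟨wb, hwb, hvb⟩ := ih (b i)
        have hrec := hf i (n+1) (by omega)
        simp only [Nat.add_sub_cancel] at hrec
        rcases le_total (f (a i) n + 1) (f (b i) n) with h | h
        · refine ⟨false :: wb, by simp [hwb], ?_⟩
          rw [hrec, max_eq_right h, hvb, walkF_cons]
          simp [List.count_cons]
        · refine ⟨true :: wa, by simp [hwa], ?_⟩
          rw [hrec, max_eq_left h, hva, walkF_cons]
          simp only [if_true, List.count_cons, beq_self_eq_true, if_pos]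
          push_cast
          ring
  -- every word gives a lower bound
  have hle : ∀ (w : List Bool) (i : Fin N),
      (w.count true : ℤ) + f (walkF a b i w) 0 ≤ f i w.length := by
    intro w
    induction w with
    | nil => intro i; simp [walkF]
    | cons c w ih =>
        intro i
        have hrec := hf i (w.length + 1) (by omega)
        simp only [Nat.add_sub_cancel] at hrec
        have hlen : (c :: w).length = w.length + 1 := rfl
        rw [hlen, hrec, walkF_cons]
        cases c with
        | true =>
            have h1 := ih (a i)
            have h2 : f (a i) w.length + 1 ≤ max (f (a i) w.length + 1) (f (b i) w.length) :=
              le_max_left _ _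
            simp only [if_true]
            have hc : ((true :: w).count true : ℤ) = (w.count true : ℤ) + 1 := by
              simp [List.count_cons]
            rw [hc]
            linarith
        | false =>
            have h1 := ih (b i)
            have h2 : f (b i) w.length ≤ max (f (a i) w.length + 1) (f (b i) w.length) :=
              le_max_right _ _
            simp only [if_neg (by simp : ¬ (false = true))]
            have hc : ((false :: w).count true : ℤ) = (w.count true : ℤ) := by
              simp [List.count_cons]
            rw [hc]
            linarith
  -- key: eventually f i (n + Q) ≥ f i n + Q
  set n1 : ℕ := N + N * (Mx - mn).toNat with hn1def
  have hcyc : ∀ u : Fin N, a^[N + Q] u = a^[N] u := by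
    intro u; rw [hQdef]; exact iter_cycle a u
  have hrun : ∀ n, n1 ≤ n → ∀ i, f i n + (Q : ℤ) ≤ f i (n + Q) := by
    intro n hn i
    obtain ⟨w, hwl, hwv⟩ := hword n i
    by_cases hR : ∃ w1 w2, w = w1 ++ List.replicate N true ++ w2
    · obtain ⟨w1, w2, hw12⟩ := hR
      set w' := w1 ++ List.replicate (N + Q) true ++ w2 with hw'def
      have hlw : n = w1.length + N + w2.length := by
        rw [← hwl, hw12]; simp; omega
      have hlen' : w'.length = n + Q := by
        rw [hw'def]; simp; omega
      have hend : walkF a b i w' = walkF a b i w := by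
        rw [hw'def, hw12]
        simp only [walkF_append, walkF_replicate]
        rw [hcyc]
      have hcw : w.count true = w1.count true + N + w2.count true := by
        rw [hw12]; simp [List.count_append, List.count_replicate]; omega
      have hcnt : w'.count true = w.count true + Q := by
        rw [hw'def, hcw]; simp [List.count_append, List.count_replicate]; omega
      have hb := hle w' i
      rw [hlen', hend, hcnt] at hb
      rw [hwv]
      push_cast at hb ⊢
      linarith
    · exfalso
      push_neg at hR
      have hcount := noRun N hN w.length w le_rfl hR
      have h1 := LB n i
      have h2 : f (walkF a b i w) 0 ≤ Mx := hM _
      have h3 : (n : ℤ) + mn - Mx ≤ (w.count true : ℤ) := by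
        rw [hwv] at h1; linarith
      have h4 : (N : ℤ) * (w.count true : ℤ) + n + 1 ≤ N * ((n : ℤ) + 1) := by
        rw [hwl] at hcount
        exact_mod_cast hcount
      have h5 : (N : ℤ) * ((n : ℤ) + mn - Mx) ≤ (N : ℤ) * (w.count true : ℤ) :=
        mul_le_mul_of_nonneg_left h3 (by positivity)
      have h6 : (n1 : ℤ) ≤ (n : ℤ) := by exact_mod_cast hn
      have h8 : ((Mx - mn).toNat : ℤ) = Mx - mn := Int.toNat_of_nonneg (by linarith)
      have h7 : (n1 : ℤ) = N + N * (Mx - mn) := by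
        rw [hn1def]; push_cast [h8]; ring
      nlinarith [h4, h5, h6, h7]
  -- monotone bounded integer sequences are eventually constant
  have evconst : ∀ (u : ℕ → ℤ) (C : ℤ), (∀ k, u k ≤ u (k+1)) → (∀ k, u k ≤ C) →
      ∃ k0, ∀ k, k0 ≤ k → u k = u k0 := by
    intro u C hmo hb
    have hmono : Monotone u := monotone_nat_of_le_succ hmo
    obtain ⟨lub, ⟨k0, hk0⟩, hmax⟩ :=
      Int.exists_greatest_of_bdd (P := fun z => ∃ k, u k = z)
        ⟨C, by rintro z ⟨k, rfl⟩; exact hb k⟩ ⟨u 0, 0, rfl⟩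
    exact ⟨k0, fun k hk => le_antisymm (hk0 ▸ hmax _ ⟨k, rfl⟩) (hmono hk)⟩
  -- for each residue class, eventually exact
  have hkey : ∀ (i : Fin N) (r : Fin Q), ∃ k0 : ℕ, ∀ k, k0 ≤ k →
      f i (n1 + r.1 + Q * k + Q) = f i (n1 + r.1 + Q * k) + Q := by
    intro i r
    set u : ℕ → ℤ := fun k => f i (n1 + r.1 + Q * k) - (Q : ℤ) * k with hudef
    have hmo : ∀ k, u k ≤ u (k+1) := by
      intro k
      have hge : n1 ≤ n1 + r.1 + Q * k :=
        le_trans (Nat.le_add_right n1 r.1) (Nat.le_add_right _ _)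
      have hstep := hrun (n1 + r.1 + Q * k) hge i
      have harg : n1 + r.1 + Q * (k+1) = (n1 + r.1 + Q * k) + Q := by ring
      simp only [hudef]
      rw [harg]
      push_cast
      linarith
    have hbd : ∀ k, u k ≤ Mx + n1 + r.1 := by
      intro k
      have hub := UB (n1 + r.1 + Q * k) i
      simp only [hudef]
      push_cast at hub ⊢
      linarith
    obtain ⟨k0, hk0⟩ := evconst u _ hmo hbd
    refine ⟨k0, fun k hk => ?_⟩
    have h1 := hk0 k hk
    have h2 := hk0 (k+1) (by omega)
    have harg : n1 + r.1 + Q * (k+1) = (n1 + r.1 + Q * k) + Q := by ring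
    simp only [hudef] at h1 h2
    rw [harg] at h2
    push_cast at h1 h2
    linarith
  choose k0f hk0f using hkey
  set K := Finset.univ.sup (fun p : Fin N × Fin Q => k0f p.1 p.2) with hKdef
  refine ⟨Q, Q, hQpos, hQpos, n1 + Q * K + Q, ?_⟩
  intro i n hn
  set s := n - n1 with hsdef
  have hsn : n = n1 + s := by omega
  have hrQ : s % Q < Q := Nat.mod_lt _ hQpos
  have hdecomp : Q * (s / Q) + s % Q = s := Nat.div_add_mod s Q
  have hKk : K + 1 ≤ s / Q := by
    have hc1 : Q * (K + 1) = Q * K + Q := by ring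
    have hc2 : (K + 1) * Q = Q * (K + 1) := Nat.mul_comm _ _
    exact (Nat.le_div_iff_mul_le hQpos).mpr (by omega)
  have hk0le : k0f i ⟨s % Q, hrQ⟩ ≤ K :=
    Finset.le_sup (f := fun p : Fin N × Fin Q => k0f p.1 p.2)
      (Finset.mem_univ (i, ⟨s % Q, hrQ⟩))
  have hmain := hk0f i ⟨s % Q, hrQ⟩ (s / Q) (by omega)
  have harg : n1 + (⟨s % Q, hrQ⟩ : Fin Q).1 + Q * (s / Q) = n := by
    simp only []
    omega
  rw [harg] at hmain
  exact hmain
end
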